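/- Let x_1, …, x_M ∈ ℝ^d satisfy ‖x_q‖₂ ≤ L for all q ∈ [M], and let λ > 0. Define D_1 := λ I and, for ℓ = 2, …, M+1, D_ℓ := λ I + ∑_{q=1}^{ℓ−1} x_q x_qᵀ (each D_ℓ is positive definite). Then for every b > 0, ∑_{q=1}^{M} min{ b, ‖x_q‖²_{D_q^{-1}} } ≤ (1 + b) · d · log( 1 + M L² / (λ d) ). -/

import Mathlib

open Matrix Finset


-- pointwise lemma
lemma min_le_mul_log {b w : ℝ} (hb : 0 < b) (hw : 0 ≤ w) :
    min b w ≤ (1 + b) * Real.log (1 + w) := by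
  have key : ∀ t : ℝ, 0 ≤ t → t ≤ b → t ≤ (1 + b) * Real.log (1 + t) := by
    intro t ht htb
    have h1 : (0:ℝ) < 1 + t := by linarith
    have hlog : t / (1 + t) ≤ Real.log (1 + t) := by
      have := Real.one_sub_inv_le_log_of_pos h1
      have h2 : 1 - (1 + t)⁻¹ = t / (1 + t) := by field_simp; ring
      linarith [h2 ▸ this]
    have hlog0 : 0 ≤ Real.log (1 + t) := Real.log_nonneg (by linarith)
    calc t = (1 + t) * (t / (1 + t)) := by field_simp
      _ ≤ (1 + t) * Real.log (1 + t) := by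
          exact mul_le_mul_of_nonneg_left hlog (by linarith)
      _ ≤ (1 + b) * Real.log (1 + t) := by
          exact mul_le_mul_of_nonneg_right (by linarith) hlog0
  rcases le_total w b with h | h
  · rw [min_eq_right h]; exact key w hw h
  · rw [min_eq_left h]
    calc b ≤ (1 + b) * Real.log (1 + b) := key b hb.le le_rfl
      _ ≤ (1 + b) * Real.log (1 + w) := by
          apply mul_le_mul_of_nonneg_left _ (by linarith)
          exact Real.log_le_log (by linarith) (by linarith)

-- PSD of vecMulVec
lemma posSemidef_vecMulVec_self {d : ℕ} (u : Fin d → ℝ) :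
    (vecMulVec u u).PosSemidef := by
  have h := Matrix.posSemidef_conjTranspose_mul_self (Matrix.replicateRow Unit u)
  rwa [Matrix.conjTranspose_replicateRow, star_trivial, ← Matrix.vecMulVec_eq] at h

-- trace of vecMulVec
lemma trace_vecMulVec_self {d : ℕ} (u : Fin d → ℝ) :
    (vecMulVec u u).trace = u ⬝ᵥ u := by
  simp [Matrix.trace, Matrix.diag, vecMulVec_apply, dotProduct]

-- trace = sum of eigenvalues for a hermitian real matrix
lemma trace_eq_sum_eigs {d : ℕ} {A : Matrix (Fin d) (Fin d) ℝ} (hA : A.IsHermitian) :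
    A.trace = ∑ i, hA.eigenvalues i := by
  conv_lhs => rw [hA.spectral_theorem, Unitary.conjStarAlgAut_apply]
  rw [Matrix.trace_mul_cycle]
  have h1 : (star (hA.eigenvectorUnitary : Matrix (Fin d) (Fin d) ℝ)) *
      (hA.eigenvectorUnitary : Matrix (Fin d) (Fin d) ℝ) = 1 := by
    exact Matrix.mem_unitaryGroup_iff'.mp hA.eigenvectorUnitary.2
  rw [h1, one_mul, Matrix.trace_diagonal]
  simp

-- det ≤ (trace/d)^d : via log
lemma log_det_le {d : ℕ} (hd : 0 < d) {A : Matrix (Fin d) (Fin d) ℝ} (hA : A.PosDef) :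
    Real.log A.det ≤ d * Real.log (A.trace / d) := by
  have hμ : ∀ i, 0 < hA.1.eigenvalues i := hA.eigenvalues_pos
  have hdet : A.det = ∏ i, hA.1.eigenvalues i := by
    rw [hA.1.det_eq_prod_eigenvalues]; norm_num
  have hdR : (0:ℝ) < d := Nat.cast_pos.mpr hd
  have jensen : ∑ i : Fin d, (d:ℝ)⁻¹ • Real.log (hA.1.eigenvalues i) ≤
      Real.log (∑ i : Fin d, (d:ℝ)⁻¹ • hA.1.eigenvalues i) := by
    apply strictConcaveOn_log_Ioi.concaveOn.le_map_sum
    · intro i _; positivity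
    · simp [Finset.card_univ]; field_simp
    · intro i _; exact hμ i
  have htr : A.trace = ∑ i, hA.1.eigenvalues i := trace_eq_sum_eigs hA.1
  have hlogdet : Real.log A.det = ∑ i, Real.log (hA.1.eigenvalues i) := by
    rw [hdet, Real.log_prod (fun i _ => (hμ i).ne')]
  rw [hlogdet, htr]
  have h2 : (∑ i : Fin d, (d:ℝ)⁻¹ • hA.1.eigenvalues i) = (∑ i, hA.1.eigenvalues i) / d := by
    rw [← Finset.smul_sum]; simp [smul_eq_mul, div_eq_inv_mul]
  calc ∑ i, Real.log (hA.1.eigenvalues i)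
      = d * ∑ i : Fin d, (d:ℝ)⁻¹ • Real.log (hA.1.eigenvalues i) := by
        rw [← Finset.smul_sum]; simp [smul_eq_mul]; field_simp
    _ ≤ d * Real.log ((∑ i, hA.1.eigenvalues i) / d) := by
        rw [← h2]; exact mul_le_mul_of_nonneg_left jensen hdR.le

set_option maxHeartbeats 1000000

section main

variable {d M : ℕ} {lam : ℝ} (x : Fin M → Fin d → ℝ)

noncomputable def Dm (lam : ℝ) (x : Fin M → Fin d → ℝ) (n : ℕ) : Matrix (Fin d) (Fin d) ℝ :=
  lam • (1 : Matrix (Fin d) (Fin d) ℝ) +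
    ∑ q ∈ Finset.univ.filter (fun q : Fin M => (q : ℕ) < n), vecMulVec (x q) (x q)

lemma posSemidef_vecMulVec_self' {d : ℕ} (u : Fin d → ℝ) :
    (vecMulVec u u).PosSemidef := by
  have h := Matrix.posSemidef_conjTranspose_mul_self (Matrix.replicateRow Unit u)
  rwa [Matrix.conjTranspose_replicateRow, star_trivial, ← Matrix.vecMulVec_eq] at h

lemma Dm_posDef (hlam : 0 < lam) (n : ℕ) : (Dm lam x n).PosDef := by
  apply Matrix.PosDef.add_posSemidef
  · rw [Matrix.posDef_iff_dotProduct_mulVec]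
    constructor
    · simp [Matrix.IsHermitian]
    · intro y hy
      have h1 : (lam • (1 : Matrix (Fin d) (Fin d) ℝ)) *ᵥ y = lam • y := by
        simp [Matrix.smul_mulVec]
      rw [h1]
      simp only [star_trivial, dotProduct_smul, smul_eq_mul]
      apply mul_pos hlam
      obtain ⟨i, hi⟩ := Function.ne_iff.mp hy
      exact Finset.sum_pos' (fun j _ => mul_self_nonneg _)
        ⟨i, Finset.mem_univ i, mul_self_pos.mpr hi⟩
  · apply Finset.sum_induction _ _ (fun A B hA hB => hA.add hB) Matrix.PosSemidef.zero
    intro q _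
    exact posSemidef_vecMulVec_self' (x q)

lemma Dm_succ {n : ℕ} (hn : n < M) :
    Dm lam x (n + 1) = Dm lam x n + vecMulVec (x ⟨n, hn⟩) (x ⟨n, hn⟩) := by
  unfold Dm
  rw [add_assoc]
  congr 1
  have hfil : Finset.univ.filter (fun q : Fin M => (q : ℕ) < n + 1) =
      insert ⟨n, hn⟩ (Finset.univ.filter (fun q : Fin M => (q : ℕ) < n)) := by
    ext q
    simp only [Finset.mem_filter, Finset.mem_univ, true_and, Finset.mem_insert]
    constructor
    · intro h
      rcases Nat.lt_succ_iff_lt_or_eq.mp h with h | h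
      · exact Or.inr h
      · exact Or.inl (Fin.ext h)
    · rintro (rfl | h)
      · exact Nat.lt_succ_self n
      · exact Nat.lt_succ_of_lt h
  rw [hfil, Finset.sum_insert (by simp)]
  exact add_comm _ _

lemma Dm_det_succ (hlam : 0 < lam) {n : ℕ} (hn : n < M) :
    (Dm lam x (n + 1)).det =
      (Dm lam x n).det * (1 + x ⟨n, hn⟩ ⬝ᵥ (Dm lam x n)⁻¹ *ᵥ x ⟨n, hn⟩) := by
  have hpd := Dm_posDef x hlam n
  have hdet : IsUnit (Dm lam x n).det := isUnit_iff_ne_zero.mpr hpd.det_pos.ne'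
  rw [Dm_succ x hn, Matrix.vecMulVec_eq Unit, Matrix.det_add_replicateCol_mul_replicateRow hdet]
  congr 1
  rw [Matrix.mul_assoc, ← Matrix.replicateCol_mulVec, Matrix.det_unique]
  simp [Matrix.replicateRow_mul_replicateCol_apply]

end main

section main2

variable {d M : ℕ} {lam : ℝ} (x : Fin M → Fin d → ℝ)

lemma Dm_log_det (hlam : 0 < lam) (n : ℕ) (hn : n ≤ M) :
    Real.log (Dm lam x n).det = d * Real.log lam +
      ∑ q ∈ Finset.univ.filter (fun q : Fin M => (q : ℕ) < n),
        Real.log (1 + x q ⬝ᵥ (Dm lam x (q : ℕ))⁻¹ *ᵥ x q) := by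
  induction n with
  | zero =>
    have h0 : Dm lam x 0 = lam • (1 : Matrix (Fin d) (Fin d) ℝ) := by
      unfold Dm; simp
    rw [h0]
    have : (lam • (1 : Matrix (Fin d) (Fin d) ℝ)).det = lam ^ d := by
      rw [Matrix.det_smul]; simp
    rw [this, Real.log_pow]
    simp
  | succ n ih =>
    have hnM : n < M := hn
    have hw : 0 ≤ x ⟨n, hnM⟩ ⬝ᵥ (Dm lam x n)⁻¹ *ᵥ x ⟨n, hnM⟩ := by
      have hps := ((Dm_posDef x hlam n).inv).posSemidef
      have := hps.dotProduct_mulVec_nonneg (x ⟨n, hnM⟩)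
      simpa using this
    have hdetpos := (Dm_posDef x hlam n).det_pos
    rw [Dm_det_succ x hlam hnM,
      Real.log_mul hdetpos.ne' (by linarith : (1:ℝ) + _ ≠ 0), ih (le_of_lt hnM)]
    have hfil : Finset.univ.filter (fun q : Fin M => (q : ℕ) < n + 1) =
        insert ⟨n, hnM⟩ (Finset.univ.filter (fun q : Fin M => (q : ℕ) < n)) := by
      ext q
      simp only [Finset.mem_filter, Finset.mem_univ, true_and, Finset.mem_insert]
      constructor
      · intro h
        rcases Nat.lt_succ_iff_lt_or_eq.mp h with h | h
        · exact Or.inr h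
        · exact Or.inl (Fin.ext h)
      · rintro (rfl | h)
        · exact Nat.lt_succ_self n
        · exact Nat.lt_succ_of_lt h
    rw [hfil, Finset.sum_insert (by simp)]
    ring

end main2

section main3

variable {d M : ℕ} {lam : ℝ} (x : Fin M → Fin d → ℝ)

lemma filter_lt_M : Finset.univ.filter (fun q : Fin M => (q : ℕ) < M) = Finset.univ := by
  apply Finset.filter_true_of_mem
  intro q _
  exact q.is_lt

lemma Dm_trace : (Dm lam x M).trace = lam * d + ∑ q, x q ⬝ᵥ x q := by
  unfold Dm
  rw [filter_lt_M, Matrix.trace_add, Matrix.trace_smul, Matrix.trace_one, Matrix.trace_sum]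
  simp only [trace_vecMulVec_self, smul_eq_mul]
  congr 1
  simp [Fintype.card_fin]

end main3

/-- determinant lemma, elliptical potential bound. If `‖x_q‖₂ ≤ L` for
`q ∈ [M]`, `λ > 0`, and `D_q = λ I + ∑_{q' < q} x_{q'} x_{q'}ᵀ`, then for every `b > 0`,
`∑_q min(b, ‖x_q‖²_{D_q⁻¹}) ≤ (1 + b) d log(1 + M L² / (λ d))`. -/
theorem sum_min_norm_sq_le
    (d M : ℕ) (L lam b : ℝ) (hlam : 0 < lam) (hb : 0 < b)
    (x : Fin M → Fin d → ℝ)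
    (hx : ∀ q : Fin M, Real.sqrt (x q ⬝ᵥ x q) ≤ L) :
    ∑ q : Fin M,
        min b
          (x q ⬝ᵥ
            ((lam • (1 : Matrix (Fin d) (Fin d) ℝ) +
                ∑ q' ∈ Finset.univ.filter (fun q' : Fin M => q' < q),
                  vecMulVec (x q') (x q'))⁻¹).mulVec (x q))
      ≤ (1 + b) * d * Real.log (1 + M * L ^ 2 / (lam * d)) := by
  have hDq : ∀ q : Fin M,
      (lam • (1 : Matrix (Fin d) (Fin d) ℝ) +
        ∑ q' ∈ Finset.univ.filter (fun q' : Fin M => q' < q), vecMulVec (x q') (x q'))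
        = Dm lam x (q : ℕ) := by
    intro q
    unfold Dm
    congr 1
  rcases Nat.eq_zero_or_pos d with hd | hd
  · subst hd
    have hz : ∀ q : Fin M, (x q ⬝ᵥ
        ((lam • (1 : Matrix (Fin 0) (Fin 0) ℝ) +
          ∑ q' ∈ Finset.univ.filter (fun q' : Fin M => q' < q),
            vecMulVec (x q') (x q'))⁻¹).mulVec (x q)) = 0 := by
      intro q; simp [dotProduct]
    simp only [hz, min_eq_right hb.le, Finset.sum_const_zero, Nat.cast_zero, mul_zero, zero_mul]
    exact le_refl 0
  -- main case
  set w : Fin M → ℝ := fun q => x q ⬝ᵥ (Dm lam x (q : ℕ))⁻¹ *ᵥ x q with hwdef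
  have hw : ∀ q : Fin M, 0 ≤ w q := by
    intro q
    have hps := ((Dm_posDef x hlam (q : ℕ)).inv).posSemidef
    have := hps.dotProduct_mulVec_nonneg (x q)
    simpa using this
  have hdR : (0:ℝ) < d := Nat.cast_pos.mpr hd
  set c : ℝ := M * L ^ 2 / (lam * d) with hcdef
  have hML : (0:ℝ) ≤ M * L ^ 2 := by positivity
  have hc : 0 ≤ c := by positivity
  have hxq : ∀ q : Fin M, x q ⬝ᵥ x q ≤ L ^ 2 := by
    intro q
    have h0 : 0 ≤ x q ⬝ᵥ x q := Finset.sum_nonneg fun i _ => mul_self_nonneg _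
    calc x q ⬝ᵥ x q = (Real.sqrt (x q ⬝ᵥ x q)) ^ 2 := (Real.sq_sqrt h0).symm
      _ ≤ L ^ 2 := pow_le_pow_left₀ (Real.sqrt_nonneg _) (hx q) 2
  have hS : ∑ q : Fin M, x q ⬝ᵥ x q ≤ M * L ^ 2 := by
    calc ∑ q : Fin M, x q ⬝ᵥ x q ≤ ∑ _q : Fin M, L ^ 2 :=
          Finset.sum_le_sum fun q _ => hxq q
      _ = M * L ^ 2 := by simp [Finset.sum_const, nsmul_eq_mul]
  have hS0 : 0 ≤ ∑ q : Fin M, x q ⬝ᵥ x q :=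
    Finset.sum_nonneg fun q _ => Finset.sum_nonneg fun i _ => mul_self_nonneg _
  have htr : (Dm lam x M).trace = lam * d + ∑ q, x q ⬝ᵥ x q := Dm_trace x
  have hlogdet : Real.log (Dm lam x M).det = d * Real.log lam + ∑ q : Fin M, Real.log (1 + w q) := by
    have := Dm_log_det x hlam M le_rfl
    rwa [filter_lt_M] at this
  have hkey : ∑ q : Fin M, Real.log (1 + w q) ≤ d * Real.log (1 + c) := by
    have h1 : Real.log (Dm lam x M).det ≤ d * Real.log ((Dm lam x M).trace / d) :=
      log_det_le hd (Dm_posDef x hlam M)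
    have htrpos : 0 < (Dm lam x M).trace / d := by
      rw [htr]; positivity
    have h2 : (Dm lam x M).trace / d ≤ (lam * d + M * L ^ 2) / d := by
      have : (Dm lam x M).trace ≤ lam * d + M * L ^ 2 := by rw [htr]; linarith
      gcongr
    have h3 : Real.log ((Dm lam x M).trace / d) ≤ Real.log ((lam * d + M * L ^ 2) / d) :=
      Real.log_le_log htrpos h2
    have h4 : (lam * d + M * L ^ 2) / d = lam * (1 + c) := by
      rw [hcdef]; field_simp
    have h5 : Real.log ((lam * d + M * L ^ 2) / d) = Real.log lam + Real.log (1 + c) := by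
      rw [h4, Real.log_mul hlam.ne' (by linarith)]
    have h6 : Real.log (Dm lam x M).det ≤ d * Real.log lam + d * Real.log (1 + c) := by
      calc Real.log (Dm lam x M).det ≤ d * Real.log ((Dm lam x M).trace / d) := h1
        _ ≤ d * Real.log ((lam * d + M * L ^ 2) / d) := mul_le_mul_of_nonneg_left h3 hdR.le
        _ = d * Real.log lam + d * Real.log (1 + c) := by rw [h5]; ring
    linarith [hlogdet ▸ h6]
  calc ∑ q : Fin M, min b (x q ⬝ᵥ
        ((lam • (1 : Matrix (Fin d) (Fin d) ℝ) +
          ∑ q' ∈ Finset.univ.filter (fun q' : Fin M => q' < q),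
            vecMulVec (x q') (x q'))⁻¹).mulVec (x q))
      = ∑ q : Fin M, min b (w q) := by
        apply Finset.sum_congr rfl
        intro q _
        rw [hDq q]
    _ ≤ ∑ q : Fin M, (1 + b) * Real.log (1 + w q) :=
        Finset.sum_le_sum fun q _ => min_le_mul_log hb (hw q)
    _ = (1 + b) * ∑ q : Fin M, Real.log (1 + w q) := by rw [Finset.mul_sum]
    _ ≤ (1 + b) * (d * Real.log (1 + c)) :=
        mul_le_mul_of_nonneg_left hkey (by linarith)
    _ = (1 + b) * d * Real.log (1 + M * L ^ 2 / (lam * d)) := by rw [hcdef]; ring
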